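/- Consider the delayed matrix difference system X(k+1) = 𝒟(X(k)) + Σ_{i=1}^{N} 𝒯ᵢ(X(k−τᵢ)), with 𝒟(X) = Σ_{j=0}^{N} Jⱼ X Jⱼᵀ, 𝒯ᵢ(X) = Hᵢ X Hᵢᵀ, delays τᵢ ∈ ℤ_{≥0}, and initial condition Ξ(k) ∈ 𝕊ⁿ_{⪰0} for k ∈ {−τ̄,…,0} where τ̄ = max τᵢ. Suppose there exist symmetric positive definite matrices P, Q₁,…,Q_N and ε > 0 such that 𝒟*(P) − P + Σᵢ Qᵢ ⪯ −εI and 𝒯ᵢ*(P) − Qᵢ ⪯ 0 for all i. Then the functional V(X_k) = ⟨P, X(k)⟩ + Σ_{i=1}^{N} Σ_{j=−τᵢ}^{−1} ⟨Qᵢ, X(k+j)⟩ satisfies V(X_{k+1}) − V(X_k) ≤ −ε·trace(X(k)) along every solution. -/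

import Mathlib

open Matrix BigOperators

noncomputable def frob {n : ℕ} (A B : Matrix (Fin n) (Fin n) ℝ) : ℝ := (A * Bᵀ).trace

private lemma psd_trace_nonneg' {n : ℕ} {A : Matrix (Fin n) (Fin n) ℝ} (hA : A.PosSemidef) :
    0 ≤ A.trace := by
  rw [Matrix.trace]
  refine Finset.sum_nonneg fun i _ => ?_
  have := hA.dotProduct_mulVec_nonneg (Pi.single i 1)
  simpa [Matrix.mulVec_single, dotProduct, Pi.single_apply] using this

private lemma trace_mul_psd_nonneg' {n : ℕ} {A B : Matrix (Fin n) (Fin n) ℝ}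
    (hA : A.PosSemidef) (hB : B.PosSemidef) : 0 ≤ (A * B).trace := by
  obtain ⟨C, hC⟩ : ∃ C : Matrix (Fin n) (Fin n) ℝ, A = star C * C := by
    open scoped MatrixOrder in
    exact ⟨CFC.sqrt A, by rw [(CFC.sqrt_nonneg A).isSelfAdjoint.star_eq, CFC.sqrt_mul_sqrt_self A hA.nonneg]⟩
  rw [hC, Matrix.mul_assoc, Matrix.trace_mul_comm]
  exact psd_trace_nonneg' (hB.mul_mul_conjTranspose_same C)

private lemma psd_sum' {n : ℕ} {ι : Type*} (s : Finset ι) (f : ι → Matrix (Fin n) (Fin n) ℝ)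
    (h : ∀ i ∈ s, (f i).PosSemidef) : (∑ i ∈ s, f i).PosSemidef := by
  classical
  induction s using Finset.induction_on with
  | empty => simpa using Matrix.PosSemidef.zero
  | insert _ _ hx ih =>
    rw [Finset.sum_insert hx]
    exact (h _ (Finset.mem_insert_self _ _)).add
      (ih fun i hi => h i (Finset.mem_insert_of_mem hi))

theorem delayed_functional_decrease {n N : ℕ}
    (J H : ℕ → Matrix (Fin n) (Fin n) ℝ) (τ : ℕ → ℕ)
    (P : Matrix (Fin n) (Fin n) ℝ) (Q : ℕ → Matrix (Fin n) (Fin n) ℝ)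
    (hP : P.PosDef) (hQ : ∀ i ∈ Finset.Icc 1 N, (Q i).PosDef)
    (ε : ℝ) (hε : 0 < ε)
    (hLyap1 : ((-ε) • (1 : Matrix (Fin n) (Fin n) ℝ) -
        ((∑ j ∈ Finset.range (N + 1), (J j)ᵀ * P * J j) - P +
          ∑ i ∈ Finset.Icc 1 N, Q i)).PosSemidef)
    (hLyap2 : ∀ i ∈ Finset.Icc 1 N, (Q i - (H i)ᵀ * P * H i).PosSemidef)
    (X : ℤ → Matrix (Fin n) (Fin n) ℝ)
    (hinit : ∀ k : ℤ, -(((Finset.Icc 1 N).sup τ : ℕ) : ℤ) ≤ k → k ≤ 0 → (X k).PosSemidef)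
    (hrec : ∀ k : ℤ, 0 ≤ k →
      X (k + 1) = (∑ j ∈ Finset.range (N + 1), J j * X k * (J j)ᵀ) +
        ∑ i ∈ Finset.Icc 1 N, H i * X (k - (τ i : ℤ)) * (H i)ᵀ) :
    ∀ k : ℤ, 0 ≤ k →
      (frob P (X (k + 1)) +
          ∑ i ∈ Finset.Icc 1 N, ∑ j ∈ Finset.Ico (k + 1 - (τ i : ℤ)) (k + 1), frob (Q i) (X j)) -
        (frob P (X k) +
          ∑ i ∈ Finset.Icc 1 N, ∑ j ∈ Finset.Ico (k - (τ i : ℤ)) k, frob (Q i) (X j)) ≤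
        -ε * (X k).trace := by
  classical
  set T : ℤ := (((Finset.Icc 1 N).sup τ : ℕ) : ℤ) with hT
  have hT0 : 0 ≤ T := by positivity
  have hτle : ∀ i ∈ Finset.Icc 1 N, (τ i : ℤ) ≤ T := by
    intro i hi
    rw [hT]
    exact_mod_cast Finset.le_sup (f := τ) hi
  -- positive semidefiniteness of all solution values
  have hpsd : ∀ k : ℤ, -T ≤ k → (X k).PosSemidef := by
    have key : ∀ m : ℕ, ∀ k : ℤ, -T ≤ k → k + T = m → (X k).PosSemidef := by
      intro m
      induction m using Nat.strong_induction_on with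
      | _ m ih =>
        intro k hk hkm
        rcases le_or_gt k 0 with h | h
        · exact hinit k hk h
        · have hk1 : (0 : ℤ) ≤ k - 1 := by omega
          have hr := hrec (k - 1) hk1
          rw [show k - 1 + 1 = k by ring] at hr
          rw [hr]
          refine (psd_sum' _ _ ?_).add (psd_sum' _ _ ?_)
          · intro j _
            have hx : (X (k - 1)).PosSemidef := by
              refine ih (k - 1 + T).toNat (by omega) (k - 1) (by omega) (by omega)
            simpa [Matrix.conjTranspose_eq_transpose_of_trivial] using
              hx.mul_mul_conjTranspose_same (J j)
          · intro i hi
            have hτ := hτle i hi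
            have hx : (X (k - 1 - (τ i : ℤ))).PosSemidef := by
              refine ih (k - 1 - (τ i : ℤ) + T).toNat (by omega) _ (by omega) (by omega)
            simpa [Matrix.conjTranspose_eq_transpose_of_trivial] using
              hx.mul_mul_conjTranspose_same (H i)
    intro k hk
    exact key (k + T).toNat k hk (by omega)
  have hsym : ∀ k : ℤ, -T ≤ k → (X k)ᵀ = X k := by
    intro k hk
    rw [← Matrix.conjTranspose_eq_transpose_of_trivial]
    exact (hpsd k hk).1
  intro k hk
  -- telescoping of the double sums
  have htel : ∀ i ∈ Finset.Icc 1 N,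
      (∑ j ∈ Finset.Ico (k + 1 - (τ i : ℤ)) (k + 1), frob (Q i) (X j)) -
        ∑ j ∈ Finset.Ico (k - (τ i : ℤ)) k, frob (Q i) (X j) =
      frob (Q i) (X k) - frob (Q i) (X (k - (τ i : ℤ))) := by
    intro i hi
    set f : ℤ → ℝ := fun j => frob (Q i) (X j)
    have hτ : (0 : ℤ) ≤ (τ i : ℤ) := by positivity
    have e1 : (∑ j ∈ Finset.Ico (k - (τ i : ℤ)) k, f j) + ∑ j ∈ Finset.Ico k (k + 1), f j =
        ∑ j ∈ Finset.Ico (k - (τ i : ℤ)) (k + 1), f j :=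
      by rw [← Finset.sum_union (Finset.Ico_disjoint_Ico_consecutive _ k _),
        Finset.Ico_union_Ico_eq_Ico (show k - (τ i : ℤ) ≤ k by omega) (show k ≤ k + 1 by omega)]
    have e2 : (∑ j ∈ Finset.Ico (k - (τ i : ℤ)) (k + 1 - (τ i : ℤ)), f j) +
        ∑ j ∈ Finset.Ico (k + 1 - (τ i : ℤ)) (k + 1), f j =
        ∑ j ∈ Finset.Ico (k - (τ i : ℤ)) (k + 1), f j :=
      by rw [← Finset.sum_union (Finset.Ico_disjoint_Ico_consecutive _ (k + 1 - (τ i : ℤ)) _),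
        Finset.Ico_union_Ico_eq_Ico (show k - (τ i : ℤ) ≤ k + 1 - (τ i : ℤ) by omega)
          (show k + 1 - (τ i : ℤ) ≤ k + 1 by omega)]
    have s1 : ∑ j ∈ Finset.Ico k (k + 1), f j = f k := by
      rw [show Finset.Ico k (k + 1) = {k} from by ext x; simp [Finset.mem_Ico]; omega,
        Finset.sum_singleton]
    have s2 : ∑ j ∈ Finset.Ico (k - (τ i : ℤ)) (k + 1 - (τ i : ℤ)), f j = f (k - (τ i : ℤ)) := by
      rw [show Finset.Ico (k - (τ i : ℤ)) (k + 1 - (τ i : ℤ)) = {k - (τ i : ℤ)} from by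
        ext x; simp [Finset.mem_Ico]; omega, Finset.sum_singleton]
    rw [s1] at e1; rw [s2] at e2
    linarith
  have hLHS : (frob P (X (k + 1)) +
          ∑ i ∈ Finset.Icc 1 N, ∑ j ∈ Finset.Ico (k + 1 - (τ i : ℤ)) (k + 1), frob (Q i) (X j)) -
        (frob P (X k) +
          ∑ i ∈ Finset.Icc 1 N, ∑ j ∈ Finset.Ico (k - (τ i : ℤ)) k, frob (Q i) (X j)) =
      (frob P (X (k + 1)) - frob P (X k)) +
        ∑ i ∈ Finset.Icc 1 N, (frob (Q i) (X k) - frob (Q i) (X (k - (τ i : ℤ)))) := by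
    rw [← Finset.sum_congr rfl htel, Finset.sum_sub_distrib]
    ring
  rw [hLHS]
  -- expand frob P (X (k+1)) using the recursion
  have hsymk : (X k)ᵀ = X k := hsym k (by omega)
  have hexp : frob P (X (k + 1)) =
      (∑ j ∈ Finset.range (N + 1), (((J j)ᵀ * P * J j) * X k).trace) +
        ∑ i ∈ Finset.Icc 1 N, (((H i)ᵀ * P * H i) * X (k - (τ i : ℤ))).trace := by
    have hsym1 : (X (k + 1))ᵀ = X (k + 1) := hsym (k + 1) (by omega)
    rw [frob, hsym1, hrec k hk, Matrix.mul_add, Matrix.trace_add, Matrix.mul_sum,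
      Matrix.mul_sum, Matrix.trace_sum, Matrix.trace_sum]
    congr 1
    · refine Finset.sum_congr rfl fun j _ => ?_
      rw [show P * (J j * X k * (J j)ᵀ) = (P * J j * X k) * (J j)ᵀ by
        simp only [Matrix.mul_assoc], Matrix.trace_mul_comm]
      simp only [Matrix.mul_assoc]
    · refine Finset.sum_congr rfl fun i hi => ?_
      rw [show P * (H i * X (k - (τ i : ℤ)) * (H i)ᵀ) = (P * H i * X (k - (τ i : ℤ))) * (H i)ᵀ by
        simp only [Matrix.mul_assoc], Matrix.trace_mul_comm]
      simp only [Matrix.mul_assoc]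
  rw [hexp]
  have hpsdk : (X k).PosSemidef := hpsd k (by omega)
  -- bound the D-terms
  have hD : (∑ j ∈ Finset.range (N + 1), (((J j)ᵀ * P * J j) * X k).trace) - frob P (X k) +
      ∑ i ∈ Finset.Icc 1 N, ((Q i) * X k).trace ≤ -ε * (X k).trace := by
    have h0 := trace_mul_psd_nonneg' hLyap1 hpsdk
    rw [Matrix.sub_mul, Matrix.trace_sub, Matrix.add_mul, Matrix.sub_mul,
      Matrix.trace_add, Matrix.trace_sub, Matrix.sum_mul, Matrix.trace_sum,
      Matrix.sum_mul, Matrix.trace_sum, Matrix.smul_mul, Matrix.trace_smul,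
      Matrix.one_mul] at h0
    rw [frob, hsymk]
    simp only [smul_eq_mul] at h0
    linarith
  -- bound the T-terms
  have hTbd : ∀ i ∈ Finset.Icc 1 N,
      (((H i)ᵀ * P * H i) * X (k - (τ i : ℤ))).trace ≤ ((Q i) * X (k - (τ i : ℤ))).trace := by
    intro i hi
    have hx : (X (k - (τ i : ℤ))).PosSemidef := hpsd _ (by have := hτle i hi; omega)
    have h0 := trace_mul_psd_nonneg' (hLyap2 i hi) hx
    rw [Matrix.sub_mul, Matrix.trace_sub] at h0
    linarith
  have hfrobQ : ∀ i ∈ Finset.Icc 1 N, frob (Q i) (X k) = ((Q i) * X k).trace := by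
    intro i hi; rw [frob, hsymk]
  have hfrobQ2 : ∀ i ∈ Finset.Icc 1 N,
      frob (Q i) (X (k - (τ i : ℤ))) = ((Q i) * X (k - (τ i : ℤ))).trace := by
    intro i hi
    rw [frob, hsym _ (by have := hτle i hi; omega)]
  have hQrw : ∑ i ∈ Finset.Icc 1 N, (frob (Q i) (X k) - frob (Q i) (X (k - (τ i : ℤ)))) =
      ∑ i ∈ Finset.Icc 1 N, (((Q i) * X k).trace - ((Q i) * X (k - (τ i : ℤ))).trace) :=
    Finset.sum_congr rfl fun i hi => by rw [hfrobQ i hi, hfrobQ2 i hi]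
  rw [hQrw, Finset.sum_sub_distrib]
  have hsum_le : ∑ i ∈ Finset.Icc 1 N, (((H i)ᵀ * P * H i) * X (k - (τ i : ℤ))).trace ≤
      ∑ i ∈ Finset.Icc 1 N, ((Q i) * X (k - (τ i : ℤ))).trace :=
    Finset.sum_le_sum hTbd
  linarith
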